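/- arXiv:2601.14006 — 3 statements merged into one kernel-verified Lean document; each statement's English description precedes it below -/
import Mathlib

section
/- Let p be a prime and n ≥ 1. Let B, B', C, C' be n×n matrices over ℚ_p with C invertible, and let N, γ₁, γ₂ be nonnegative integers. Suppose that: (i) the matrix A := C⁻¹BC has all entries in ℤ_p; (ii) v_p(C) ≥ −γ₂; (iii) v_p(C⁻¹) ≥ −γ₁; (iv) v_p(B − B') ≥ N + γ₁ + γ₂ + 1; (v) v_p(C − C') ≥ N + γ₁ + 2γ₂ + 1. Then C' is invertible and v_p(C'⁻¹B'C' − C⁻¹BC) ≥ N + 1. (In other words: given the matrix of Frobenius in the rigid basis with p-adic precision N + γ₁ + γ₂ + 1 and the change-of-basis matrix with precision N + γ₁ + 2γ₂ + 1, one obtains the matrix of Frobenius in the crystalline basis with precision N + 1.) -/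
open IsUltrametricDist

variable {p : ℕ} [Fact p.Prime]

lemma pd_sum_le {ι : Type*} {s : Finset ι} {f : ι → ℚ_[p]} {r : ℝ} (hr : 0 ≤ r)
    (h : ∀ i ∈ s, ‖f i‖ ≤ r) : ‖∑ i ∈ s, f i‖ ≤ r :=
  norm_sum_le_of_forall_le_of_nonneg hr h

lemma pd_sub_le (x y : ℚ_[p]) : ‖x - y‖ ≤ max ‖x‖ ‖y‖ := by
  simpa [sub_eq_add_neg] using norm_add_le_max x (-y)

lemma pd_add_le (x y : ℚ_[p]) : ‖x + y‖ ≤ max ‖x‖ ‖y‖ := Padic.nonarchimedean x y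

lemma matmul_bound {n : ℕ} {M N : Matrix (Fin n) (Fin n) ℚ_[p]} {r s : ℝ}
    (hr : 0 ≤ r) (hs : 0 ≤ s) (hM : ∀ i j, ‖M i j‖ ≤ r) (hN : ∀ i j, ‖N i j‖ ≤ s) :
    ∀ i j, ‖(M * N) i j‖ ≤ r * s := by
  intro i j
  rw [Matrix.mul_apply]
  refine pd_sum_le (mul_nonneg hr hs) fun k _ => ?_
  rw [norm_mul]
  exact mul_le_mul (hM i k) (hN k j) (norm_nonneg _) hr

lemma prod_sub_prod_bound {ι : Type*} (s : Finset ι) (a b : ι → ℚ_[p]) {ε : ℝ} (hε : 0 ≤ ε)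
    (ha : ∀ i, ‖a i‖ ≤ 1) (hb : ∀ i, ‖b i‖ ≤ 1) (hab : ∀ i, ‖a i - b i‖ ≤ ε) :
    ‖∏ i ∈ s, a i - ∏ i ∈ s, b i‖ ≤ ε := by
  classical
  induction s using Finset.induction with
  | empty => simpa
  | @insert x s hx ih =>
    rw [Finset.prod_insert hx, Finset.prod_insert hx]
    have key : a x * ∏ i ∈ s, a i - b x * ∏ i ∈ s, b i
        = a x * (∏ i ∈ s, a i - ∏ i ∈ s, b i) + (a x - b x) * ∏ i ∈ s, b i := by ring
    rw [key]
    refine (pd_add_le _ _).trans (max_le ?_ ?_)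
    · rw [norm_mul]
      calc ‖a x‖ * ‖∏ i ∈ s, a i - ∏ i ∈ s, b i‖ ≤ 1 * ε :=
        mul_le_mul (ha x) ih (norm_nonneg _) zero_le_one
      _ = ε := one_mul ε
    · rw [norm_mul]
      have hprod : ‖∏ i ∈ s, b i‖ ≤ 1 := by
        rw [norm_prod]
        exact Finset.prod_le_one (fun i _ => norm_nonneg _) (fun i _ => hb i)
      calc ‖a x - b x‖ * ‖∏ i ∈ s, b i‖ ≤ ε * 1 :=
        mul_le_mul (hab x) hprod (norm_nonneg _) hε
      _ = ε := mul_one ε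

lemma sign_smul_norm {σε : ℤˣ} (x : ℚ_[p]) : ‖(σε : ℤ) • x‖ = ‖x‖ := by
  rcases Int.units_eq_one_or σε with h | h <;> simp [h]

lemma det_norm_le_one {n : ℕ} (M : Matrix (Fin n) (Fin n) ℚ_[p]) (h : ∀ i j, ‖M i j‖ ≤ 1) :
    ‖M.det‖ ≤ 1 := by
  rw [Matrix.det_apply]
  refine pd_sum_le zero_le_one fun σ _ => ?_
  rw [show (Equiv.Perm.sign σ : ℤˣ) • ∏ i, M (σ i) i = ((Equiv.Perm.sign σ : ℤˣ) : ℤ) • ∏ i, M (σ i) i from rfl]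
  rw [sign_smul_norm, norm_prod]
  exact Finset.prod_le_one (fun i _ => norm_nonneg _) (fun i _ => h _ _)

lemma det_sub_det_bound {n : ℕ} (M N : Matrix (Fin n) (Fin n) ℚ_[p]) {ε : ℝ} (hε : 0 ≤ ε)
    (hM : ∀ i j, ‖M i j‖ ≤ 1) (hN : ∀ i j, ‖N i j‖ ≤ 1)
    (hMN : ∀ i j, ‖M i j - N i j‖ ≤ ε) : ‖M.det - N.det‖ ≤ ε := by
  rw [Matrix.det_apply, Matrix.det_apply, ← Finset.sum_sub_distrib]
  refine pd_sum_le hε fun σ _ => ?_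
  rw [← smul_sub]
  rw [show (Equiv.Perm.sign σ : ℤˣ) • (∏ i, M (σ i) i - ∏ i, N (σ i) i)
      = ((Equiv.Perm.sign σ : ℤˣ) : ℤ) • (∏ i, M (σ i) i - ∏ i, N (σ i) i) from rfl]
  rw [sign_smul_norm]
  exact prod_sub_prod_bound _ _ _ hε (fun i => hM _ _) (fun i => hN _ _) (fun i => hMN _ _)

lemma adjugate_norm_le_one {n : ℕ} (M : Matrix (Fin n) (Fin n) ℚ_[p]) (h : ∀ i j, ‖M i j‖ ≤ 1) :
    ∀ i j, ‖M.adjugate i j‖ ≤ 1 := by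
  intro i j
  rw [Matrix.adjugate_apply]
  refine det_norm_le_one _ fun a b => ?_
  rw [Matrix.updateRow_apply]
  split
  · rcases eq_or_ne b i with hb | hb <;> simp [Pi.single_apply, hb]
  · exact h a b

lemma det_norm_one {n : ℕ} (M : Matrix (Fin n) (Fin n) ℚ_[p]) {ε : ℝ} (hε : ε < 1)
    (h : ‖M.det - 1‖ ≤ ε) : ‖M.det‖ = 1 := by
  have h1 : ‖M.det‖ ≤ 1 := by
    have := (pd_add_le (M.det - 1) 1).trans (max_le (h.trans hε.le) norm_one.le)
    simpa using this
  have h2 : (1 : ℝ) ≤ ‖M.det‖ := by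
    by_contra hlt
    push_neg at hlt
    have : ‖(M.det - 1) - M.det‖ ≤ max ‖M.det - 1‖ ‖M.det‖ := pd_sub_le _ _
    simp only [sub_sub_cancel_left, norm_neg, norm_one] at this
    have hmax := max_lt (lt_of_le_of_lt h hε) hlt
    linarith
  linarith

lemma inv_norm_le_one {n : ℕ} (M : Matrix (Fin n) (Fin n) ℚ_[p])
    (hdet : ‖M.det‖ = 1) (h : ∀ i j, ‖M i j‖ ≤ 1) : ∀ i j, ‖M⁻¹ i j‖ ≤ 1 := by
  intro i j
  have hne : M.det ≠ 0 := by
    intro h0; rw [h0, norm_zero] at hdet; norm_num at hdet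
  rw [Matrix.inv_def, Matrix.smul_apply, Ring.inverse_eq_inv', smul_eq_mul, norm_mul,
    norm_inv, hdet, inv_one, one_mul]
  exact adjugate_norm_le_one M h i j

/-- precision of the conjugated Frobenius matrix.
For a matrix `M` over `ℚ_[p]`, `v_p(M) ≥ k` is expressed as
`∀ i j, ‖M i j‖ ≤ (p : ℝ) ^ (-k : ℤ)`, and "entries in `ℤ_p`" as `‖M i j‖ ≤ 1`. -/
theorem frobenius_crys_precision (p : ℕ) [Fact p.Prime] (n : ℕ) (hn : 1 ≤ n)
    (B B' C C' : Matrix (Fin n) (Fin n) ℚ_[p]) (hC : IsUnit C)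
    (N γ₁ γ₂ : ℕ)
    (hA : ∀ i j, ‖(C⁻¹ * B * C) i j‖ ≤ 1)
    (hvC : ∀ i j, ‖C i j‖ ≤ (p : ℝ) ^ (γ₂ : ℤ))
    (hvCinv : ∀ i j, ‖C⁻¹ i j‖ ≤ (p : ℝ) ^ (γ₁ : ℤ))
    (hB : ∀ i j, ‖(B - B') i j‖ ≤ (p : ℝ) ^ (-((N : ℤ) + γ₁ + γ₂ + 1)))
    (hCC' : ∀ i j, ‖(C - C') i j‖ ≤ (p : ℝ) ^ (-((N : ℤ) + γ₁ + 2 * γ₂ + 1))) :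
    IsUnit C' ∧
      ∀ i j, ‖(C'⁻¹ * B' * C' - C⁻¹ * B * C) i j‖ ≤ (p : ℝ) ^ (-((N : ℤ) + 1)) := by
  have hp1 : (1 : ℝ) < p := by exact_mod_cast (Fact.out : p.Prime).one_lt
  have hp0 : (0 : ℝ) < p := lt_trans one_pos hp1
  have hpne : (p : ℝ) ≠ 0 := ne_of_gt hp0
  set A : Matrix (Fin n) (Fin n) ℚ_[p] := C⁻¹ * B * C with hAdef
  set E : Matrix (Fin n) (Fin n) ℚ_[p] := C⁻¹ * C' with hEdef
  set ε : ℝ := (p : ℝ) ^ (-((N : ℤ) + 1)) with hεdef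
  set ε' : ℝ := (p : ℝ) ^ (-((N : ℤ) + 2 * γ₂ + 1)) with hε'def
  have hε0 : (0 : ℝ) ≤ ε := (zpow_pos hp0 _).le
  have hε'0 : (0 : ℝ) ≤ ε' := (zpow_pos hp0 _).le
  have hε'ε : ε' ≤ ε := zpow_le_zpow_right₀ hp1.le (by omega)
  have hε'1 : ε' < 1 := by
    have : ε' < (p : ℝ) ^ (0 : ℤ) := zpow_lt_zpow_right₀ hp1 (by omega)
    simpa using this
  have hCdet : IsUnit C.det := (Matrix.isUnit_iff_isUnit_det C).mp hC
  have hCinvC : C⁻¹ * C = 1 := Matrix.nonsing_inv_mul C hCdet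
  have hCCinv : C * C⁻¹ = 1 := Matrix.mul_nonsing_inv C hCdet
  -- bound on E - 1
  have hXid : E - 1 = -(C⁻¹ * (C - C')) := by
    rw [hEdef, ← hCinvC]; noncomm_ring
  have hX : ∀ i j, ‖(E - 1) i j‖ ≤ ε' := by
    intro i j
    rw [hXid, Matrix.neg_apply, norm_neg]
    have h1 := matmul_bound (zpow_pos hp0 _).le (zpow_pos hp0 _).le hvCinv hCC' i j
    refine h1.trans (le_of_eq ?_)
    rw [← zpow_add₀ hpne, hε'def]
    congr 1
    push_cast
    ring
  have honeent : ∀ i j, ‖(1 : Matrix (Fin n) (Fin n) ℚ_[p]) i j‖ ≤ 1 := by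
    intro i j
    rw [Matrix.one_apply]
    split <;> simp
  have hEent : ∀ i j, ‖E i j‖ ≤ 1 := by
    intro i j
    have hij : E i j = (E - 1) i j + (1 : Matrix (Fin n) (Fin n) ℚ_[p]) i j := by
      simp [Matrix.sub_apply]
    rw [hij]
    exact (pd_add_le _ _).trans (max_le ((hX i j).trans (hε'1.le.trans le_rfl)) (honeent i j))
  have hdet1 : ‖E.det‖ = 1 := by
    refine det_norm_one E hε'1 ?_
    have := det_sub_det_bound E 1 hε'0 hEent honeent
      (fun i j => by simpa [Matrix.sub_apply] using hX i j)
    simpa using this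
  have hEdetunit : IsUnit E.det := isUnit_iff_ne_zero.mpr fun h0 => by simp [h0] at hdet1
  have hEunit : IsUnit E := (Matrix.isUnit_iff_isUnit_det E).mpr hEdetunit
  have hEinvE : E⁻¹ * E = 1 := Matrix.nonsing_inv_mul E hEdetunit
  have hEinv : ∀ i j, ‖E⁻¹ i j‖ ≤ 1 := inv_norm_le_one E hdet1 hEent
  have hC'eq : C' = C * E := by
    rw [hEdef, ← Matrix.mul_assoc, hCCinv, Matrix.one_mul]
  have hC'unit : IsUnit C' := hC'eq ▸ hC.mul hEunit
  refine ⟨hC'unit, ?_⟩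
  -- bound on C⁻¹ * B' * C - A
  have hA'A : ∀ i j, ‖(C⁻¹ * B' * C - A) i j‖ ≤ ε := by
    have hid : C⁻¹ * B' * C - A = -(C⁻¹ * (B - B') * C) := by
      rw [hAdef]; noncomm_ring
    intro i j
    rw [hid, Matrix.neg_apply, norm_neg]
    have h1 := matmul_bound (zpow_pos hp0 _).le (zpow_pos hp0 _).le hvCinv hB
    have h2 := matmul_bound (mul_nonneg (zpow_pos hp0 _).le (zpow_pos hp0 _).le)
      (zpow_pos hp0 _).le h1 hvC i j
    refine h2.trans (le_of_eq ?_)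
    rw [← zpow_add₀ hpne, ← zpow_add₀ hpne, hεdef]
    congr 1
    push_cast
    ring
  -- main identity
  have key : C'⁻¹ * B' * C' - A
      = E⁻¹ * ((C⁻¹ * B' * C - A) * E + (A * (E - 1) - (E - 1) * A)) := by
    rw [hC'eq, Matrix.mul_inv_rev]
    have h2 : E⁻¹ * ((C⁻¹ * B' * C - A) * E + (A * (E - 1) - (E - 1) * A))
        = E⁻¹ * C⁻¹ * B' * (C * E) - E⁻¹ * E * A := by noncomm_ring
    rw [h2, hEinvE, Matrix.one_mul]
  -- bound the inner matrix
  have hD : ∀ i j, ‖((C⁻¹ * B' * C - A) * E + (A * (E - 1) - (E - 1) * A)) i j‖ ≤ ε := by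
    intro i j
    rw [Matrix.add_apply]
    refine (pd_add_le _ _).trans (max_le ?_ ?_)
    · have := matmul_bound hε0 zero_le_one hA'A hEent i j
      simpa using this
    · rw [Matrix.sub_apply]
      refine (pd_sub_le _ _).trans (max_le ?_ ?_)
      · have := matmul_bound zero_le_one hε'0 hA hX i j
        rw [one_mul] at this
        exact this.trans hε'ε
      · have := matmul_bound hε'0 zero_le_one hX hA i j
        rw [mul_one] at this
        exact this.trans hε'ε
  intro i j
  rw [key]
  have := matmul_bound zero_le_one hε0 hEinv hD i j
  simpa using this
end

section
/- Let p be a prime, n ≥ 1, and N ≥ 1 an integer. Let A, A' be n×n matrices over ℚ_p such that A is invertible, p·A⁻¹ has all entries in ℤ_p, and v_p(A − A') ≥ N + 1. Then A' is invertible, p·A'⁻¹ has all entries in ℤ_p, and v_p(p·A'⁻¹ − p·A⁻¹) ≥ N. (In other words: given the matrix of Frobenius on crystalline cohomology with p-adic precision N + 1, one recovers the matrix of Verschiebung V = pF⁻¹ with precision N.) -/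
open Matrix

/-- Entrywise bound on a matrix product over `ℚ_[p]`. -/
private lemma mul_entry_bound {p : ℕ} [Fact p.Prime] {n : ℕ}
    (M N : Matrix (Fin n) (Fin n) ℚ_[p]) {a b : ℝ} (ha : 0 ≤ a) (hb : 0 ≤ b)
    (hM : ∀ i j, ‖M i j‖ ≤ a) (hN : ∀ i j, ‖N i j‖ ≤ b) :
    ∀ i j, ‖(M * N) i j‖ ≤ a * b := by
  intro i j
  rw [Matrix.mul_apply]
  refine IsUltrametricDist.norm_sum_le_of_forall_le_of_nonneg (mul_nonneg ha hb) ?_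
  intro k _
  rw [norm_mul]
  exact mul_le_mul (hM i k) (hN k j) (norm_nonneg _) ha

/-- recovering Verschiebung `V = p F⁻¹` with precision `N` from
Frobenius with precision `N + 1`. -/
theorem verschiebung_precision (p : ℕ) [Fact p.Prime] (n N : ℕ) (hn : 1 ≤ n) (hN : 1 ≤ N)
    (A A' : Matrix (Fin n) (Fin n) ℚ_[p]) (hA : IsUnit A)
    (hint : ∀ i j, ‖((p : ℚ_[p]) • A⁻¹) i j‖ ≤ 1)
    (happrox : ∀ i j, ‖(A - A') i j‖ ≤ (p : ℝ) ^ (-((N : ℤ) + 1))) :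
    IsUnit A' ∧ (∀ i j, ‖((p : ℚ_[p]) • A'⁻¹) i j‖ ≤ 1) ∧
      ∀ i j, ‖((p : ℚ_[p]) • A'⁻¹ - (p : ℚ_[p]) • A⁻¹) i j‖ ≤ (p : ℝ) ^ (-(N : ℤ)) := by
  have hp : (1:ℝ) < (p:ℝ) := by exact_mod_cast (Fact.out : p.Prime).one_lt
  have hp0 : (0:ℝ) < (p:ℝ) := lt_trans one_pos hp
  set B : Matrix (Fin n) (Fin n) ℚ_[p] := (p : ℚ_[p]) • A⁻¹ with hB
  set C : Matrix (Fin n) (Fin n) ℚ_[p] := A⁻¹ * (A - A') with hC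
  -- entry bound on C
  have hCbound : ∀ i j, ‖C i j‖ ≤ (p : ℝ) ^ (-(N:ℤ)) := by
    intro i j
    have hBE : ∀ i j, ‖(B * (A - A')) i j‖ ≤ 1 * (p : ℝ) ^ (-((N : ℤ) + 1)) :=
      mul_entry_bound B (A - A') zero_le_one (by positivity) hint happrox
    have hBEC : (B * (A - A')) i j = (p : ℚ_[p]) * C i j := by
      rw [hB, Matrix.smul_mul, ← hC, Matrix.smul_apply, smul_eq_mul]
    have hnp : ‖(p : ℚ_[p])‖ = (p:ℝ)⁻¹ := Padic.norm_p
    have h1 := hBE i j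
    rw [hBEC, norm_mul, hnp, one_mul] at h1
    have h2 : ‖C i j‖ ≤ (p:ℝ) * ((p:ℝ) ^ (-((N : ℤ) + 1))) := by
      calc ‖C i j‖ = (p:ℝ) * ((p:ℝ)⁻¹ * ‖C i j‖) := by field_simp
      _ ≤ (p:ℝ) * ((p:ℝ) ^ (-((N : ℤ) + 1))) :=
          mul_le_mul_of_nonneg_left h1 (le_of_lt hp0)
    calc ‖C i j‖ ≤ (p:ℝ) * ((p:ℝ) ^ (-((N : ℤ) + 1))) := h2
    _ = (p : ℝ) ^ (-(N:ℤ)) := by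
        rw [show (-(N:ℤ)) = 1 + (-((N:ℤ) + 1)) by ring, zpow_add₀ (ne_of_gt hp0), zpow_one]
  have hC1 : ∀ i j, ‖C i j‖ ≤ 1 := fun i j =>
    (hCbound i j).trans (zpow_le_one_of_nonpos₀ hp.le (by simp))
  have hClt : ∀ i j, ‖C i j‖ < 1 := by
    intro i j
    refine lt_of_le_of_lt (hCbound i j) (zpow_lt_one_of_neg₀ hp ?_)
    simp; omega
  -- lift C to the p-adic integers
  set Ch : Matrix (Fin n) (Fin n) ℤ_[p] := fun i j => ⟨C i j, hC1 i j⟩ with hCh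
  have hmapC : (PadicInt.Coe.ringHom (p := p)).mapMatrix Ch = C := by
    ext i j; rfl
  have hChlt : ∀ i j, ‖Ch i j‖ < 1 := by
    intro i j
    rw [PadicInt.norm_def]
    exact hClt i j
  have hChzero : ∀ i j, PadicInt.toZMod (Ch i j) = 0 := by
    intro i j
    have : Ch i j ∈ RingHom.ker (PadicInt.toZMod : ℤ_[p] →+* ZMod p) := by
      rw [PadicInt.ker_toZMod, PadicInt.maximalIdeal_eq_span_p, Ideal.mem_span_singleton,
        ← PadicInt.norm_lt_one_iff_dvd]
      exact hChlt i j
    rwa [RingHom.mem_ker] at this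
  -- 1 - Ch is invertible over ℤ_[p]
  have hdetmap : PadicInt.toZMod (1 - Ch).det = 1 := by
    rw [show ((1 - Ch).det) = ((1:Matrix (Fin n) (Fin n) ℤ_[p]) - Ch).det from rfl,
      RingHom.map_det PadicInt.toZMod (1 - Ch)]
    have : (PadicInt.toZMod : ℤ_[p] →+* ZMod p).mapMatrix (1 - Ch) = 1 := by
      ext i j
      simp only [RingHom.mapMatrix_apply, Matrix.map_apply, Matrix.sub_apply, map_sub]
      rw [hChzero i j, sub_zero]
      by_cases h : i = j <;> simp [Matrix.one_apply, h]
    rw [RingHom.mapMatrix_apply] at this ⊢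
    rw [this, Matrix.det_one]
  have hdet : IsUnit (1 - Ch).det := by
    rw [PadicInt.isUnit_iff]
    rcases lt_or_eq_of_le (PadicInt.norm_le_one (1 - Ch).det) with hlt | heq
    · exfalso
      have : PadicInt.toZMod (1 - Ch).det = 0 := by
        have hk : (1 - Ch).det ∈ RingHom.ker (PadicInt.toZMod : ℤ_[p] →+* ZMod p) := by
          rw [PadicInt.ker_toZMod, PadicInt.maximalIdeal_eq_span_p, Ideal.mem_span_singleton,
            ← PadicInt.norm_lt_one_iff_dvd]
          exact hlt
        rwa [RingHom.mem_ker] at hk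
      rw [hdetmap] at this
      exact one_ne_zero this
    · exact heq
  have hUh : IsUnit (1 - Ch) := (Matrix.isUnit_iff_isUnit_det _).mpr hdet
  obtain ⟨u, hu⟩ := hUh
  -- transfer to ℚ_[p]
  set w : (Matrix (Fin n) (Fin n) ℚ_[p])ˣ :=
    Units.map ((PadicInt.Coe.ringHom (p := p)).mapMatrix.toMonoidHom) u with hw
  have hwval : (w : Matrix (Fin n) (Fin n) ℚ_[p]) = 1 - C := by
    rw [hw, Units.coe_map]
    show (PadicInt.Coe.ringHom (p := p)).mapMatrix (u : Matrix (Fin n) (Fin n) ℤ_[p]) = 1 - C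
    rw [hu, map_sub, _root_.map_one, hmapC]
  have hU : IsUnit (1 - C) := ⟨w, hwval⟩
  -- the inverse of 1 - C has integral entries
  have hDentry : ∀ i j, ‖(1 - C)⁻¹ i j‖ ≤ 1 := by
    intro i j
    have h1 : (1 - C)⁻¹ = (((w⁻¹ : (Matrix (Fin n) (Fin n) ℚ_[p])ˣ)) :
        Matrix (Fin n) (Fin n) ℚ_[p]) := by
      rw [Matrix.coe_units_inv, hwval]
    have h2 : ((w⁻¹ : (Matrix (Fin n) (Fin n) ℚ_[p])ˣ) : Matrix (Fin n) (Fin n) ℚ_[p])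
        = (PadicInt.Coe.ringHom (p := p)).mapMatrix
          ((u⁻¹ : (Matrix (Fin n) (Fin n) ℤ_[p])ˣ) : Matrix (Fin n) (Fin n) ℤ_[p]) := by
      rw [hw, Units.coe_map_inv]
      rfl
    rw [h1, h2]
    have : ((PadicInt.Coe.ringHom (p := p)).mapMatrix
        ((u⁻¹ : (Matrix (Fin n) (Fin n) ℤ_[p])ˣ) : Matrix (Fin n) (Fin n) ℤ_[p])) i j
        = (((u⁻¹ : (Matrix (Fin n) (Fin n) ℤ_[p])ˣ) : Matrix (Fin n) (Fin n) ℤ_[p]) i j :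
            ℚ_[p]) := rfl
    rw [this, ← PadicInt.norm_def]
    exact PadicInt.norm_le_one _
  -- A' = A * (1 - C)
  have hAA : A * A⁻¹ = 1 := Matrix.mul_nonsing_inv A ((Matrix.isUnit_iff_isUnit_det A).mp hA)
  have hA' : A' = A * (1 - C) := by
    rw [hC, Matrix.mul_sub, mul_one, ← Matrix.mul_assoc, hAA, Matrix.one_mul]
    abel
  have hA'unit : IsUnit A' := hA' ▸ hA.mul hU
  have hinv : A'⁻¹ = (1 - C)⁻¹ * A⁻¹ := by rw [hA', Matrix.mul_inv_rev]
  have hpinv : (p : ℚ_[p]) • A'⁻¹ = (1 - C)⁻¹ * B := by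
    rw [hinv, hB, Matrix.mul_smul]
  refine ⟨hA'unit, ?_, ?_⟩
  · intro i j
    have := mul_entry_bound ((1 - C)⁻¹) B zero_le_one zero_le_one hDentry hint i j
    rw [hpinv]
    simpa using this
  · intro i j
    -- (1-C)⁻¹ - 1 = (1-C)⁻¹ * C
    have hDC : (1 - C)⁻¹ - 1 = (1 - C)⁻¹ * C := by
      have h3 : (1 - C)⁻¹ * (1 - C) = 1 :=
        Matrix.nonsing_inv_mul _ ((Matrix.isUnit_iff_isUnit_det _).mp hU)
      rw [Matrix.mul_sub, mul_one] at h3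
      rw [sub_eq_iff_eq_add] at h3 ⊢
      conv_lhs => rw [h3]
      rw [add_comm]
    have hdiff : (p : ℚ_[p]) • A'⁻¹ - (p : ℚ_[p]) • A⁻¹ = (1 - C)⁻¹ * (C * B) := by
      rw [hpinv, ← hB, ← Matrix.mul_assoc, ← hDC, Matrix.sub_mul, Matrix.one_mul]
    rw [hdiff]
    have hCB : ∀ i j, ‖(C * B) i j‖ ≤ (p : ℝ) ^ (-(N:ℤ)) * 1 :=
      mul_entry_bound C B (by positivity) zero_le_one hCbound hint
    have := mul_entry_bound ((1 - C)⁻¹) (C * B) zero_le_one (by positivity) hDentry hCB i j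
    calc ‖((1 - C)⁻¹ * (C * B)) i j‖ ≤ 1 * ((p : ℝ) ^ (-(N:ℤ)) * 1) := this
    _ = (p : ℝ) ^ (-(N:ℤ)) := by ring
end

section
/- Let p be a prime and n ≥ 1. Let A be an invertible n×n matrix over ℚ_p, and let m, a be integers with a + m ≥ 1. Suppose v_p(A⁻¹) ≥ m, and let A' be an n×n matrix over ℚ_p with v_p(A − A') ≥ a. Then A' is invertible, v_p(A'⁻¹) ≥ m, and v_p(A'⁻¹ − A⁻¹) ≥ a + 2m. (That is: if A is known with precision a and its inverse has valuation at least m, then A⁻¹ is determined with precision at least a + 2m.) -/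
open IsUltrametricDist in
private lemma padic_mul_entry_le {p : ℕ} [Fact p.Prime] {n : ℕ}
    (M N : Matrix (Fin n) (Fin n) ℚ_[p]) {c d : ℝ} (hc : 0 ≤ c) (hd : 0 ≤ d)
    (hM : ∀ i j, ‖M i j‖ ≤ c) (hN : ∀ i j, ‖N i j‖ ≤ d) (i j : Fin n) :
    ‖(M * N) i j‖ ≤ c * d := by
  rw [Matrix.mul_apply]
  refine norm_sum_le_of_forall_le_of_nonneg (mul_nonneg hc hd) fun k _ => ?_
  rw [norm_mul]
  exact mul_le_mul (hM i k) (hN k j) (norm_nonneg _) hc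

open IsUltrametricDist in
private lemma padic_det_le_one {p : ℕ} [Fact p.Prime] {n : ℕ}
    (M : Matrix (Fin n) (Fin n) ℚ_[p]) (h : ∀ i j, ‖M i j‖ ≤ 1) : ‖M.det‖ ≤ 1 := by
  rw [Matrix.det_apply]
  refine norm_sum_le_of_forall_le_of_nonneg zero_le_one fun σ _ => ?_
  have hs : ‖((Equiv.Perm.sign σ : ℤ) : ℚ_[p])‖ = 1 := by
    rcases Int.units_eq_one_or (Equiv.Perm.sign σ) with hσ | hσ <;> simp [hσ]
  rw [Units.smul_def, zsmul_eq_mul, norm_mul, hs, one_mul, norm_prod]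
  exact Finset.prod_le_one (fun i _ => norm_nonneg _) (fun i _ => h _ _)

open IsUltrametricDist in
private lemma padic_det_one_sub {p : ℕ} [Fact p.Prime] {n : ℕ}
    (E : Matrix (Fin n) (Fin n) ℚ_[p]) (hE : ∀ i j, ‖E i j‖ ≤ ((p : ℝ))⁻¹) :
    ‖(1 - E).det‖ = 1 := by
  have hp1 : (1 : ℝ) < (p : ℝ) := by exact_mod_cast (Fact.out : p.Prime).one_lt
  have hpinv : ((p : ℝ))⁻¹ < 1 := inv_lt_one_of_one_lt₀ hp1
  have hpinv0 : (0 : ℝ) ≤ ((p : ℝ))⁻¹ := by positivity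
  set B : Matrix (Fin n) (Fin n) ℚ_[p] := 1 - E with hB
  have hdiag : ∀ i, ‖B i i‖ = 1 := by
    intro i
    have h1 : ‖(1 : ℚ_[p])‖ ≠ ‖(-(E i i))‖ := by
      rw [norm_one, norm_neg]
      exact fun hco => absurd (hco ▸ hE i i) (not_le.mpr hpinv)
    have : B i i = 1 + -(E i i) := by simp [hB, Matrix.sub_apply, Matrix.one_apply, sub_eq_add_neg]
    rw [this, norm_add_eq_max_of_norm_ne_norm h1, norm_one, norm_neg]
    exact max_eq_left ((hE i i).trans hpinv.le)
  have hoff : ∀ i j, i ≠ j → ‖B i j‖ ≤ ((p : ℝ))⁻¹ := by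
    intro i j hij
    have : B i j = -(E i j) := by simp [hB, Matrix.sub_apply, Matrix.one_apply_ne hij]
    rw [this, norm_neg]; exact hE i j
  have hle1 : ∀ i j, ‖B i j‖ ≤ 1 := by
    intro i j
    rcases eq_or_ne i j with rfl | hij
    · exact (hdiag i).le
    · exact (hoff i j hij).trans hpinv.le
  rw [Matrix.det_apply]
  simp_rw [Units.smul_def]
  rw [← Finset.add_sum_erase _ _ (Finset.mem_univ (1 : Equiv.Perm (Fin n)))]
  have hterm1 : ‖(Equiv.Perm.sign (1 : Equiv.Perm (Fin n)) : ℤ) •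
      ∏ i, B ((1 : Equiv.Perm (Fin n)) i) i‖ = 1 := by
    simp only [map_one, Units.val_one, one_smul, Equiv.Perm.one_apply]
    rw [norm_prod]
    exact Finset.prod_eq_one fun i _ => hdiag i
  have hrest : ‖∑ σ ∈ Finset.univ.erase (1 : Equiv.Perm (Fin n)),
      (Equiv.Perm.sign σ : ℤ) • ∏ i, B (σ i) i‖ ≤ ((p : ℝ))⁻¹ := by
    refine norm_sum_le_of_forall_le_of_nonneg hpinv0 fun σ hσ => ?_
    obtain ⟨i0, hi0⟩ : ∃ i0, σ i0 ≠ i0 := by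
      by_contra hcon
      push_neg at hcon
      exact (Finset.mem_erase.mp hσ).1 (Equiv.ext hcon)
    have hs : ‖((Equiv.Perm.sign σ : ℤ) : ℚ_[p])‖ = 1 := by
      rcases Int.units_eq_one_or (Equiv.Perm.sign σ) with h' | h' <;> simp [h']
    rw [zsmul_eq_mul, norm_mul, hs, one_mul, norm_prod]
    calc ∏ i, ‖B (σ i) i‖ ≤ ∏ i, (if i = i0 then ((p : ℝ))⁻¹ else 1) := by
          refine Finset.prod_le_prod (fun i _ => norm_nonneg _) fun i _ => ?_
          split_ifs with hi
          · exact hi ▸ hoff _ _ hi0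
          · exact hle1 _ _
      _ = ((p : ℝ))⁻¹ := by simp
  have hne : ‖(Equiv.Perm.sign (1 : Equiv.Perm (Fin n)) : ℤ) •
      ∏ i, B ((1 : Equiv.Perm (Fin n)) i) i‖ ≠
      ‖∑ σ ∈ Finset.univ.erase (1 : Equiv.Perm (Fin n)),
      (Equiv.Perm.sign σ : ℤ) • ∏ i, B (σ i) i‖ := by
    rw [hterm1]
    exact fun hco => absurd (hco ▸ hrest) (not_le.mpr hpinv)
  rw [norm_add_eq_max_of_norm_ne_norm hne, hterm1]
  exact max_eq_left (hrest.trans hpinv.le)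

private lemma padic_inv_entry_le_one {p : ℕ} [Fact p.Prime] {n : ℕ}
    (B : Matrix (Fin n) (Fin n) ℚ_[p]) (hdet : ‖B.det‖ = 1) (hle1 : ∀ i j, ‖B i j‖ ≤ 1)
    (i j : Fin n) : ‖B⁻¹ i j‖ ≤ 1 := by
  have hadj : ‖B.adjugate i j‖ ≤ 1 := by
    rw [Matrix.adjugate_apply]
    refine padic_det_le_one _ fun i' j' => ?_
    rcases eq_or_ne i' j with rfl | hij
    · rw [Matrix.updateRow_self]
      rcases eq_or_ne j' i with rfl | h
      · simp
      · simp [Pi.single_apply, h]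
    · rw [Matrix.updateRow_ne hij]; exact hle1 _ _
  rw [Matrix.inv_def, Matrix.smul_apply, smul_eq_mul, norm_mul, Ring.inverse_eq_inv', norm_inv,
    hdet, inv_one, one_mul]
  exact hadj

/-- precision of the inverse of a p-adic matrix
(Caruso–Roe–Vaccon / Lemma on precision of inverses). -/
theorem matrix_inverse_precision (p : ℕ) [Fact p.Prime] (n : ℕ) (hn : 1 ≤ n)
    (A A' : Matrix (Fin n) (Fin n) ℚ_[p]) (hA : IsUnit A)
    (m a : ℤ) (hma : 1 ≤ a + m)
    (hAinv : ∀ i j, ‖A⁻¹ i j‖ ≤ (p : ℝ) ^ (-m))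
    (happrox : ∀ i j, ‖(A - A') i j‖ ≤ (p : ℝ) ^ (-a)) :
    IsUnit A' ∧ (∀ i j, ‖A'⁻¹ i j‖ ≤ (p : ℝ) ^ (-m)) ∧
      ∀ i j, ‖(A'⁻¹ - A⁻¹) i j‖ ≤ (p : ℝ) ^ (-(a + 2 * m)) := by
  have hp1 : (1 : ℝ) < (p : ℝ) := by exact_mod_cast (Fact.out : p.Prime).one_lt
  have hp0 : (0 : ℝ) < (p : ℝ) := lt_trans one_pos hp1
  have hzm : (0 : ℝ) ≤ (p : ℝ) ^ (-m) := (zpow_pos hp0 _).le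
  have hza : (0 : ℝ) ≤ (p : ℝ) ^ (-a) := (zpow_pos hp0 _).le
  set E : Matrix (Fin n) (Fin n) ℚ_[p] := A⁻¹ * (A - A') with hEdef
  have hE : ∀ i j, ‖E i j‖ ≤ ((p : ℝ))⁻¹ := by
    intro i j
    refine (padic_mul_entry_le _ _ hzm hza hAinv happrox i j).trans ?_
    rw [← zpow_add₀ hp0.ne', ← zpow_neg_one]
    exact zpow_le_zpow_right₀ hp1.le (by omega)
  set B : Matrix (Fin n) (Fin n) ℚ_[p] := 1 - E with hBdef
  have hdetB : ‖B.det‖ = 1 := padic_det_one_sub E hE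
  have hBle1 : ∀ i j, ‖B i j‖ ≤ 1 := by
    intro i j
    have hpinv : ((p : ℝ))⁻¹ ≤ 1 := by
      rw [inv_le_one_iff₀]; right; exact hp1.le
    rcases eq_or_ne i j with rfl | hij
    · calc ‖B i i‖ = ‖(1 : ℚ_[p]) - E i i‖ := by
            simp [hBdef, Matrix.sub_apply, Matrix.one_apply]
        _ ≤ max ‖(1 : ℚ_[p])‖ ‖E i i‖ := by
            rw [sub_eq_add_neg]
            exact (IsUltrametricDist.norm_add_le_max _ _).trans (by rw [norm_neg])
        _ ≤ 1 := max_le norm_one.le ((hE i i).trans hpinv)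
    · calc ‖B i j‖ = ‖E i j‖ := by
            simp [hBdef, Matrix.sub_apply, Matrix.one_apply_ne hij]
        _ ≤ 1 := (hE i j).trans hpinv
  have hBdet : IsUnit B.det :=
    isUnit_iff_ne_zero.mpr (fun h => by simp [h] at hdetB)
  have hBunit : IsUnit B := (Matrix.isUnit_iff_isUnit_det B).mpr hBdet
  have hAdet : IsUnit A.det := (Matrix.isUnit_iff_isUnit_det A).mp hA
  have hAB : A * B = A' := by
    rw [hBdef, mul_sub, mul_one, hEdef, ← mul_assoc, Matrix.mul_nonsing_inv _ hAdet, one_mul,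
      sub_sub_cancel]
  have hA'unit : IsUnit A' := hAB ▸ hA.mul hBunit
  have hA'det : IsUnit A'.det := (Matrix.isUnit_iff_isUnit_det A').mp hA'unit
  have hBinv : ∀ i j, ‖B⁻¹ i j‖ ≤ 1 := padic_inv_entry_le_one B hdetB hBle1
  have hA'inv : A'⁻¹ = B⁻¹ * A⁻¹ := by rw [← hAB, Matrix.mul_inv_rev]
  have hbound2 : ∀ i j, ‖A'⁻¹ i j‖ ≤ (p : ℝ) ^ (-m) := by
    intro i j
    rw [hA'inv]
    have := padic_mul_entry_le B⁻¹ A⁻¹ zero_le_one hzm hBinv hAinv i j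
    rwa [one_mul] at this
  refine ⟨hA'unit, hbound2, fun i j => ?_⟩
  have hkey : A'⁻¹ - A⁻¹ = A'⁻¹ * ((A - A') * A⁻¹) := by
    rw [sub_mul, Matrix.mul_nonsing_inv _ hAdet, mul_sub, mul_one, ← mul_assoc,
      Matrix.nonsing_inv_mul _ hA'det, one_mul]
  rw [hkey]
  have hinner := padic_mul_entry_le (A - A') A⁻¹ hza hzm happrox hAinv
  have := padic_mul_entry_le A'⁻¹ ((A - A') * A⁻¹) hzm (mul_nonneg hza hzm) hbound2 hinner i j
  refine this.trans (le_of_eq ?_)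
  rw [← zpow_add₀ hp0.ne', ← zpow_add₀ hp0.ne']
  ring_nf
end
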